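/- With h : ℤ²[A] → ℛ the ℤ-module isomorphism satisfying h(A^i e₁) = X^i for all i ∈ ℕ, the dynamical systems Φ and T are conjugate via h: T ∘ h = h ∘ Φ as maps from ℤ²[A] to ℛ. -/

import Mathlib

open Matrix Polynomial

set_option maxHeartbeats 1000000

noncomputable section

/-- `ℤ²[A]` as a `ℤ`-submodule of `ℚ²`. -/
def intSpanSub {n : ℕ} (A : Matrix (Fin n) (Fin n) ℚ) : Submodule ℤ (Fin n → ℚ) :=
  Submodule.span ℤ
    {x | ∃ (i : ℕ) (v : Fin n → ℤ), x = (A ^ i).mulVec (fun j => ((v j : ℚ)))}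

/-- The digit vector `(ν, 0)ᵀ`. -/
def digitVec (ν : ℤ) : Fin 2 → ℚ := ![(ν : ℚ), 0]

lemma aux_coeff_int (b : ℤ) (k : ℕ) (hk : k ≠ 0) : ((b : Polynomial ℤ)).coeff k = 0 := by
  rw [← Polynomial.C_eq_intCast, Polynomial.coeff_C, if_neg hk]

lemma aux_mulVec_zsmul (A : Matrix (Fin 2) (Fin 2) ℚ) (n : ℤ) (x : Fin 2 → ℚ) :
    A.mulVec (n • x) = n • A.mulVec x := by
  rw [← Int.cast_smul_eq_zsmul ℚ n x, Matrix.mulVec_smul, Int.cast_smul_eq_zsmul]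

lemma aux_mulVec_mem {A : Matrix (Fin 2) (Fin 2) ℚ} {x : Fin 2 → ℚ}
    (hx : x ∈ intSpanSub A) : A.mulVec x ∈ intSpanSub A := by
  induction hx using Submodule.span_induction with
  | mem x hx =>
    obtain ⟨i, v, rfl⟩ := hx
    exact Submodule.subset_span ⟨i + 1, v, by rw [Matrix.mulVec_mulVec, ← pow_succ']⟩
  | zero => rw [Matrix.mulVec_zero]; exact Submodule.zero_mem _
  | add x y hx hy ihx ihy => rw [Matrix.mulVec_add]; exact Submodule.add_mem _ ihx ihy
  | smul n x hx ih => rw [aux_mulVec_zsmul]; exact Submodule.smul_mem _ _ ih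

lemma aux_e_mem (A : Matrix (Fin 2) (Fin 2) ℚ) (i : ℕ) :
    (A ^ i).mulVec ![1, 0] ∈ intSpanSub A :=
  Submodule.subset_span ⟨i, ![1, 0], congrArg _ (by funext j; fin_cases j <;> simp)⟩

lemma aux_span_le (A : Matrix (Fin 2) (Fin 2) ℚ) (hA1 : A.mulVec ![1, 0] = ![0, 1]) :
    intSpanSub A ≤ Submodule.span ℤ {x | ∃ i : ℕ, x = (A ^ i).mulVec ![1, 0]} := by
  apply Submodule.span_le.2
  rintro x ⟨i, v, rfl⟩
  have hv : (fun j => ((v j : ℚ))) = (v 0 : ℚ) • ![1, 0] + (v 1 : ℚ) • ![0, 1] := by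
    funext j; fin_cases j <;> simp
  have h01 : (A ^ i).mulVec ![0, 1] = (A ^ (i + 1)).mulVec ![1, 0] := by
    rw [← hA1, Matrix.mulVec_mulVec, ← pow_succ]
  rw [hv, Matrix.mulVec_add, Matrix.mulVec_smul, Matrix.mulVec_smul, h01,
    Int.cast_smul_eq_zsmul ℚ, Int.cast_smul_eq_zsmul ℚ]
  exact Submodule.add_mem _
    (Submodule.smul_mem _ _ (Submodule.subset_span ⟨i, rfl⟩))
    (Submodule.smul_mem _ _ (Submodule.subset_span ⟨i + 1, rfl⟩))

/-- the dynamical systems `Φ` (on `ℤ²[A]`) and `T`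
(on `ℛ = ℤ[x]/qℤ[x]`) are conjugate via the `ℤ`-module isomorphism `h` with
`h(Aⁱe₁) = Xⁱ`: one has `T ∘ h = h ∘ Φ`. -/
theorem stmt15 (α β : ℚ)
    (hirr : Irreducible (X ^ 2 + C α * X + C β : ℚ[X]))
    (c a b : ℤ) (hc : 0 < c)
    (ha : (a : ℚ) = (c : ℚ) * α) (hb : (b : ℚ) = (c : ℚ) * β)
    (hprim : Int.gcd c (Int.gcd a b) = 1)
    (A : Matrix (Fin 2) (Fin 2) ℚ) (hA : A = !![0, -β; 1, -α])
    (Φ : (Fin 2 → ℚ) → Fin 2 → ℚ)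
    (hΦmem : ∀ x ∈ intSpanSub A, Φ x ∈ intSpanSub A)
    (hΦ : ∀ x ∈ intSpanSub A, ∃ ν : ℤ, 0 ≤ ν ∧ ν ≤ |b| - 1 ∧
      x = digitVec ν + A.mulVec (Φ x))
    (Q : Polynomial ℤ)
    (hQ : Q = Polynomial.C c * X ^ 2 + Polynomial.C a * X + Polynomial.C b)
    (T : (Polynomial ℤ ⧸ Ideal.span {Q}) → Polynomial ℤ ⧸ Ideal.span {Q})
    (hT : ∀ r : Polynomial ℤ ⧸ Ideal.span {Q}, ∃ ν : ℤ, 0 ≤ ν ∧ ν ≤ |b| - 1 ∧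
      (Ideal.Quotient.mk (Ideal.span {Q}) X) * T r = r - (ν : Polynomial ℤ ⧸ Ideal.span {Q}))
    (h : intSpanSub A ≃ₗ[ℤ] Polynomial ℤ ⧸ Ideal.span {Q})
    (hh : ∀ (x : intSpanSub A) (i : ℕ),
      (x : Fin 2 → ℚ) = (A ^ i).mulVec ![1, 0] →
      h x = (Ideal.Quotient.mk (Ideal.span {Q}) X) ^ i) :
    ∀ x : intSpanSub A, T (h x) = h ⟨Φ x, hΦmem x x.2⟩ := by
  set XQ : Polynomial ℤ ⧸ Ideal.span {Q} := Ideal.Quotient.mk (Ideal.span {Q}) X with hXQ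
  -- basic matrix facts
  have hA1 : A.mulVec ![1, 0] = ![0, 1] := by
    subst hA
    funext j
    fin_cases j <;> simp [Matrix.mulVec, dotProduct, Fin.sum_univ_succ]
  -- coefficients of Q
  have hcoeff0 : Q.coeff 0 = b := by
    simp [hQ, coeff_add, coeff_C_mul, coeff_X_pow, coeff_C, aux_coeff_int]
  have hcoeff1 : Q.coeff 1 = a := by
    simp [hQ, coeff_add, coeff_C_mul, coeff_X_pow, coeff_C, aux_coeff_int]
  have hcoeff2 : Q.coeff 2 = c := by
    simp [hQ, coeff_add, coeff_C_mul, coeff_X_pow, coeff_C, aux_coeff_int]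
  have hQne : Q ≠ 0 := fun h0 => by simp [h0] at hcoeff2; omega
  -- Q is primitive
  have hQprim : Q.IsPrimitive := by
    intro r hr
    rw [Polynomial.C_dvd_iff_dvd_coeff] at hr
    have h0 := hr 0; have h1 := hr 1; have h2 := hr 2
    rw [hcoeff0] at h0; rw [hcoeff1] at h1; rw [hcoeff2] at h2
    have : r ∣ (Int.gcd c (Int.gcd a b) : ℤ) :=
      Int.dvd_coe_gcd h2 (dvd_trans (Int.dvd_coe_gcd h1 h0) (Int.natCast_dvd_natCast.2 dvd_rfl))
    rw [hprim] at this
    exact isUnit_of_dvd_one this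
  -- Q is irreducible over ℤ
  have hmap : Q.map (Int.castRingHom ℚ) = Polynomial.C (c : ℚ) * (X ^ 2 + C α * X + C β) := by
    simp only [hQ, Polynomial.map_add, Polynomial.map_mul, Polynomial.map_pow,
      Polynomial.map_C, Polynomial.map_X, Int.coe_castRingHom]
    rw [ha, hb, Polynomial.C_mul, Polynomial.C_mul]
    ring
  have hcq : IsUnit (Polynomial.C (c : ℚ)) := by
    apply Polynomial.isUnit_C.2
    apply IsUnit.mk0
    exact_mod_cast hc.ne'
  have hQirr : Irreducible Q := by
    rw [Polynomial.IsPrimitive.Int.irreducible_iff_irreducible_map_cast hQprim, hmap]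
    exact (associated_unit_mul_left _ _ hcq).symm.irreducible hirr
  have hQprime : Prime Q := UniqueFactorizationMonoid.irreducible_iff_prime.1 hQirr
  haveI : (Ideal.span {Q}).IsPrime := (Ideal.span_singleton_prime hQne).2 hQprime
  haveI : IsDomain (Polynomial ℤ ⧸ Ideal.span {Q}) := Ideal.Quotient.isDomain _
  -- XQ ≠ 0
  have hXne : XQ ≠ 0 := by
    intro h0
    rw [hXQ, Ideal.Quotient.eq_zero_iff_mem, Ideal.mem_span_singleton] at h0
    have hd := Polynomial.natDegree_le_of_dvd h0 Polynomial.X_ne_zero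
    rw [Polynomial.natDegree_X] at hd
    have : Q.coeff 2 = 0 := Polynomial.coeff_eq_zero_of_natDegree_lt (by omega)
    rw [hcoeff2] at this
    omega
  -- divisibility lemma
  have hdvd : ∀ m : ℤ, XQ ∣ (m : Polynomial ℤ ⧸ Ideal.span {Q}) → |m| < |b| → m = 0 := by
    rintro m ⟨s, hs⟩ hlt
    obtain ⟨s', rfl⟩ := Ideal.Quotient.mk_surjective s
    have hmem : (X * s' - Polynomial.C m : Polynomial ℤ) ∈ Ideal.span {Q} := by
      have hCm : (Polynomial.C m : Polynomial ℤ) = (m : Polynomial ℤ) := by simp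
      rw [← Ideal.Quotient.eq_zero_iff_mem, map_sub, _root_.map_mul,
        hCm, map_intCast, ← hXQ, ← hs, sub_self]
    rw [Ideal.mem_span_singleton] at hmem
    have heval := Polynomial.eval_dvd (x := (0 : ℤ)) hmem
    simp [hQ] at heval
    have : |b| ∣ m := (abs_dvd _ _).2 heval
    exact Int.eq_zero_of_abs_lt_dvd this hlt
  -- key: h intertwines multiplication by A and by X
  have key0 : ∀ (x : Fin 2 → ℚ)
      (_ : x ∈ Submodule.span ℤ {x | ∃ i : ℕ, x = (A ^ i).mulVec ![1, 0]}),
      ∀ (hx : x ∈ intSpanSub A) (hAx : A.mulVec x ∈ intSpanSub A),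
      h ⟨A.mulVec x, hAx⟩ = XQ * h ⟨x, hx⟩ := by
    intro x hxs
    induction hxs using Submodule.span_induction with
    | mem x hxm =>
      intro hx hAx
      obtain ⟨i, rfl⟩ := hxm
      have h1 : h ⟨(A ^ i).mulVec ![1, 0], hx⟩ = XQ ^ i := hh _ i rfl
      have h2 : h ⟨A.mulVec ((A ^ i).mulVec ![1, 0]), hAx⟩ = XQ ^ (i + 1) :=
        hh _ (i + 1) (by
          show A.mulVec ((A ^ i).mulVec ![1, 0]) = _
          rw [Matrix.mulVec_mulVec, ← pow_succ'])
      rw [h1, h2]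
      exact pow_succ' XQ i
    | zero =>
      intro hx hAx
      have e1 : (⟨A.mulVec 0, hAx⟩ : intSpanSub A) = 0 := by
        apply Subtype.ext; simp [Matrix.mulVec_zero]
      have e2 : (⟨(0 : Fin 2 → ℚ), hx⟩ : intSpanSub A) = 0 := rfl
      rw [e1, e2]
      simp
    | add x y hxs hys ihx ihy =>
      intro hx hAx
      have hxm : x ∈ intSpanSub A := by
        refine Submodule.span_le.2 ?_ hxs
        rintro z ⟨i, rfl⟩; exact aux_e_mem A i
      have hym : y ∈ intSpanSub A := by
        refine Submodule.span_le.2 ?_ hys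
        rintro z ⟨i, rfl⟩; exact aux_e_mem A i
      have hAxm := aux_mulVec_mem hxm
      have hAym := aux_mulVec_mem hym
      have e1 : (⟨A.mulVec (x + y), hAx⟩ : intSpanSub A)
          = ⟨A.mulVec x, hAxm⟩ + ⟨A.mulVec y, hAym⟩ := by
        apply Subtype.ext; simp [Matrix.mulVec_add]
      have e2 : (⟨x + y, hx⟩ : intSpanSub A) = ⟨x, hxm⟩ + ⟨y, hym⟩ := rfl
      rw [e1, e2, map_add, map_add, ihx hxm hAxm, ihy hym hAym, mul_add]
    | smul n x hxs ih =>
      intro hx hAx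
      have hxm : x ∈ intSpanSub A := by
        refine Submodule.span_le.2 ?_ hxs
        rintro z ⟨i, rfl⟩; exact aux_e_mem A i
      have hAxm := aux_mulVec_mem hxm
      have e1 : (⟨A.mulVec (n • x), hAx⟩ : intSpanSub A) = n • ⟨A.mulVec x, hAxm⟩ := by
        apply Subtype.ext
        rw [Submodule.coe_smul]
        exact aux_mulVec_zsmul A n x
      have e2 : (⟨n • x, hx⟩ : intSpanSub A) = n • (⟨x, hxm⟩ : intSpanSub A) := rfl
      rw [e1, e2, _root_.map_smul, _root_.map_smul, ih hxm hAxm, mul_smul_comm]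
  have key : ∀ (x : Fin 2 → ℚ) (hx : x ∈ intSpanSub A)
      (hAx : A.mulVec x ∈ intSpanSub A),
      h ⟨A.mulVec x, hAx⟩ = XQ * h ⟨x, hx⟩ := by
    intro x hx
    exact key0 x (aux_span_le A hA1 hx) hx
  -- digit vectors
  have he0mem : (![1, 0] : Fin 2 → ℚ) ∈ intSpanSub A := by
    have := aux_e_mem A 0
    rwa [pow_zero, Matrix.one_mulVec] at this
  have hdmem : ∀ ν : ℤ, digitVec ν ∈ intSpanSub A := by
    intro ν
    have hdv : digitVec ν = ν • ![1, 0] := by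
      funext j; fin_cases j <;> simp [digitVec]
    rw [hdv]
    exact Submodule.smul_mem _ _ he0mem
  have hdval : ∀ ν : ℤ, ∀ (hm : digitVec ν ∈ intSpanSub A),
      h ⟨digitVec ν, hm⟩ = (ν : Polynomial ℤ ⧸ Ideal.span {Q}) := by
    intro ν hm
    have e1 : (⟨digitVec ν, hm⟩ : intSpanSub A) = ν • ⟨![1, 0], he0mem⟩ := by
      apply Subtype.ext
      rw [Submodule.coe_smul]
      funext j; fin_cases j <;> simp [digitVec]
    have e2 : h ⟨![1, 0], he0mem⟩ = 1 := by
      have := hh ⟨![1, 0], he0mem⟩ 0 (by rw [pow_zero, Matrix.one_mulVec])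
      rwa [pow_zero] at this
    rw [e1, _root_.map_smul, e2, zsmul_eq_mul, mul_one]
  -- main argument
  intro x
  obtain ⟨ν, hν0, hν1, hxd⟩ := hΦ x x.2
  obtain ⟨ν', hν'0, hν'1, hTx⟩ := hT (h x)
  set y : intSpanSub A := ⟨Φ x, hΦmem x x.2⟩ with hy
  have hAy : A.mulVec (Φ ↑x) ∈ intSpanSub A := aux_mulVec_mem y.2
  have hxsplit : x = ⟨digitVec ν, hdmem ν⟩ + ⟨A.mulVec (Φ ↑x), hAy⟩ := by
    apply Subtype.ext
    rw [Submodule.coe_add]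
    exact hxd
  have hhx : h x = (ν : Polynomial ℤ ⧸ Ideal.span {Q}) + XQ * h y := by
    rw [hxsplit, map_add, hdval ν (hdmem ν), key (Φ ↑x) y.2 hAy]
  have hkey : XQ * (T (h x) - h y) = ((ν - ν' : ℤ) : Polynomial ℤ ⧸ Ideal.span {Q}) := by
    rw [mul_sub, hTx, hhx]
    push_cast
    ring
  have hb1 : |ν - ν'| < |b| := by
    rw [abs_sub_lt_iff]
    constructor <;> omega
  have hz : ν - ν' = 0 := hdvd _ ⟨_, hkey.symm⟩ hb1
  rw [hz] at hkey
  push_cast at hkey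
  rcases mul_eq_zero.1 hkey with h0 | h0
  · exact absurd h0 hXne
  · exact sub_eq_zero.1 h0
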